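/- For T a closed densely-defined operator from H to K, the operator I + T*T is a bijection from the domain of T*T onto H, and its inverse is a positive bounded self-adjoint operator B satisfying 0 ≤ B ≤ I. -/

import Mathlib

open LinearPMap
open scoped InnerProductSpace ComplexConjugate

set_option linter.unusedSectionVars false

namespace VonNeumannAux

variable {H K : Type*} [NormedAddCommGroup H] [InnerProductSpace ℂ H] [CompleteSpace H]
  [NormedAddCommGroup K] [InnerProductSpace ℂ K] [CompleteSpace K]

/-- Surjectivity of `I + T†T`, via the orthogonal decomposition of `H × K` along the
closed graph of `T`. -/
theorem surj (T : H →ₗ.[ℂ] K) (hdense : Dense (T.domain : Set H))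
    (hclosed : IsClosed (T.graph : Set (H × K))) (y : H) :
    ∃ p : {p : T.domain // T p ∈ T.adjoint.domain},
      (p.1 : H) + T.adjoint ⟨T p.1, p.2⟩ = y := by
  classical
  set e := WithLp.prodContinuousLinearEquiv 2 ℂ H K with he
  set G : Submodule ℂ (WithLp 2 (H × K)) :=
    T.graph.comap (e.toLinearEquiv : WithLp 2 (H × K) →ₗ[ℂ] H × K) with hGdef
  have hG : IsClosed (G : Set (WithLp 2 (H × K))) := by
    have h1 : (G : Set (WithLp 2 (H × K))) = e ⁻¹' (T.graph : Set (H × K)) := rfl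
    rw [h1]
    exact hclosed.preimage e.continuous
  haveI : CompleteSpace G := hG.completeSpace_coe
  obtain ⟨a, ha, b, hb, hab⟩ := G.exists_add_mem_mem_orthogonal (e.symm (y, 0))
  have hagraph : e a ∈ T.graph := ha
  rw [mem_graph_iff] at hagraph
  obtain ⟨x, hx1, hx2⟩ := hagraph
  have hsum : e a + e b = (y, 0) := by
    rw [← _root_.map_add, ← hab, e.apply_symm_apply]
  have hy : (e a).1 + (e b).1 = y := congrArg Prod.fst hsum
  have h0 : (e a).2 + (e b).2 = 0 := congrArg Prod.snd hsum
  have horth : ∀ v : T.domain, ⟪(v : H), (e b).1⟫_ℂ + ⟪T v, (e b).2⟫_ℂ = 0 := by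
    intro v
    have hmem : e.symm ((v : H), T v) ∈ G := by
      show e (e.symm _) ∈ T.graph
      rw [e.apply_symm_apply]
      exact T.mem_graph v
    have h2 := (Submodule.mem_orthogonal G b).mp hb _ hmem
    rw [WithLp.prod_inner_apply] at h2
    exact h2
  have hb2 : (e b).2 = -(T x) := by
    rw [hx2]
    exact eq_neg_of_add_eq_zero_right h0
  have hkey : ∀ v : T.domain, ⟪(e b).1, (v : H)⟫_ℂ = ⟪T x, T v⟫_ℂ := by
    intro v
    have h3 := horth v
    rw [hb2, inner_neg_right] at h3
    have h4 : ⟪(v : H), (e b).1⟫_ℂ = ⟪T v, T x⟫_ℂ := by linear_combination h3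
    calc ⟪(e b).1, (v : H)⟫_ℂ = conj ⟪(v : H), (e b).1⟫_ℂ := (inner_conj_symm _ _).symm
      _ = conj ⟪T v, T x⟫_ℂ := by rw [h4]
      _ = ⟪T x, T v⟫_ℂ := inner_conj_symm _ _
  have hmemTx : T x ∈ T.adjoint.domain :=
    T.mem_adjoint_domain_of_exists _ ⟨(e b).1, fun v => hkey v⟩
  have happ : T.adjoint ⟨T x, hmemTx⟩ = (e b).1 :=
    adjoint_apply_eq hdense ⟨T x, hmemTx⟩ fun v => hkey v
  exact ⟨⟨x, hmemTx⟩, by rw [happ, hx1]; exact hy⟩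

/-- The fundamental inner-product identity `⟪x + T†Tx, x⟫ = ‖x‖² + ‖Tx‖²`. -/
theorem inner_self (T : H →ₗ.[ℂ] K) (hdense : Dense (T.domain : Set H))
    (p : {p : T.domain // T p ∈ T.adjoint.domain}) :
    ⟪(p.1 : H) + T.adjoint ⟨T p.1, p.2⟩, (p.1 : H)⟫_ℂ =
      ((‖(p.1 : H)‖ ^ 2 + ‖T p.1‖ ^ 2 : ℝ) : ℂ) := by
  rw [inner_add_left]
  have h1 : ⟪T.adjoint ⟨T p.1, p.2⟩, (p.1 : H)⟫_ℂ = ⟪T p.1, T p.1⟫_ℂ :=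
    adjoint_isFormalAdjoint hdense ⟨T p.1, p.2⟩ p.1
  rw [h1, inner_self_eq_norm_sq_to_K, inner_self_eq_norm_sq_to_K]
  norm_cast

/-- The norm bound `‖x‖ ≤ ‖x + T†Tx‖`. -/
theorem norm_le (T : H →ₗ.[ℂ] K) (hdense : Dense (T.domain : Set H))
    (p : {p : T.domain // T p ∈ T.adjoint.domain}) :
    ‖(p.1 : H)‖ ≤ ‖(p.1 : H) + T.adjoint ⟨T p.1, p.2⟩‖ := by
  rcases eq_or_lt_of_le (norm_nonneg (p.1 : H)) with h | h
  · rw [← h]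
    exact norm_nonneg _
  · have h1 := inner_self T hdense p
    have h2 : ‖(p.1 : H)‖ ^ 2 ≤ ‖⟪(p.1 : H) + T.adjoint ⟨T p.1, p.2⟩, (p.1 : H)⟫_ℂ‖ := by
      rw [h1]
      rw [Complex.norm_real]
      have : (0:ℝ) ≤ ‖(p.1 : H)‖ ^ 2 + ‖T p.1‖ ^ 2 := by positivity
      rw [Real.norm_eq_abs, abs_of_nonneg this]
      nlinarith [sq_nonneg (‖T p.1‖)]
    have h3 := norm_inner_le_norm (𝕜 := ℂ) ((p.1 : H) + T.adjoint ⟨T p.1, p.2⟩) (p.1 : H)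
    have h4 : ‖(p.1 : H)‖ * ‖(p.1 : H)‖ ≤ ‖(p.1 : H) + T.adjoint ⟨T p.1, p.2⟩‖ * ‖(p.1 : H)‖ := by
      nlinarith
    exact le_of_mul_le_mul_right h4 h

/-- Injectivity of `I + T†T`. -/
theorem inj (T : H →ₗ.[ℂ] K) (hdense : Dense (T.domain : Set H)) :
    Function.Injective
      (fun p : {p : T.domain // T p ∈ T.adjoint.domain} =>
        (p.1 : H) + T.adjoint ⟨T p.1, p.2⟩) := by
  intro p q hpq
  have hd : T (p.1 - q.1) ∈ T.adjoint.domain := by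
    rw [T.map_sub]
    exact Submodule.sub_mem _ p.2 q.2
  have hsub : (⟨T (p.1 - q.1), hd⟩ : T.adjoint.domain) =
      (⟨T p.1, p.2⟩ : T.adjoint.domain) - ⟨T q.1, q.2⟩ := by
    apply Subtype.ext
    simp [T.map_sub]
  have hzero : ((p.1 - q.1 : T.domain) : H) + T.adjoint ⟨T (p.1 - q.1), hd⟩ = 0 := by
    rw [hsub, T.adjoint.map_sub]
    push_cast
    have := sub_eq_zero_of_eq hpq
    simp only at this ⊢
    rw [← this]
    abel
  have hle := norm_le T hdense ⟨p.1 - q.1, hd⟩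
  rw [hzero] at hle
  simp only [norm_zero] at hle
  have h5 : ((p.1 - q.1 : T.domain) : H) = 0 := norm_le_zero_iff.mp hle
  have h6 : p.1 = q.1 := by
    have : (p.1 : H) - (q.1 : H) = 0 := by push_cast at h5; exact h5
    exact Subtype.coe_injective (by rw [sub_eq_zero] at this; exact this)
  exact Subtype.ext h6

end VonNeumannAux

open VonNeumannAux

/-- For a closed densely-defined operator `T : H → K` between complex
Hilbert spaces, `I + T*T` is a bijection from the domain of `T*T`
(namely `{x ∈ D(T) : Tx ∈ D(T*)}`) onto `H`, and it has a positive bounded self-adjoint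
inverse `B` with `0 ≤ B ≤ I`. -/
theorem one_add_adjoint_comp_self_bijective_of_closed_dense
    {H K : Type*} [NormedAddCommGroup H] [InnerProductSpace ℂ H] [CompleteSpace H]
    [NormedAddCommGroup K] [InnerProductSpace ℂ K] [CompleteSpace K]
    (T : H →ₗ.[ℂ] K) (hdense : Dense (T.domain : Set H))
    (hclosed : IsClosed (T.graph : Set (H × K))) :
    Function.Bijective
      (fun p : {p : T.domain // T p ∈ T.adjoint.domain} =>
        (p.1 : H) + T.adjoint ⟨T p.1, p.2⟩) ∧
    ∃ B : H →L[ℂ] H, B.IsPositive ∧ IsSelfAdjoint B ∧ ((1 : H →L[ℂ] H) - B).IsPositive ∧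
      (∀ p : {p : T.domain // T p ∈ T.adjoint.domain},
        B ((p.1 : H) + T.adjoint ⟨T p.1, p.2⟩) = (p.1 : H)) ∧
      (∀ y : H, ∃ p : {p : T.domain // T p ∈ T.adjoint.domain},
        (p.1 : H) + T.adjoint ⟨T p.1, p.2⟩ = y) := by
  classical
  have hsurj := surj T hdense hclosed
  have hinj := inj T hdense
  -- the chosen preimage of `y`
  set c : H → {p : T.domain // T p ∈ T.adjoint.domain} := fun y => (hsurj y).choose with hc
  have hspec : ∀ y : H, ((c y).1 : H) + T.adjoint ⟨T (c y).1, (c y).2⟩ = y :=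
    fun y => (hsurj y).choose_spec
  have huniq : ∀ (p : {p : T.domain // T p ∈ T.adjoint.domain}) (y : H),
      (p.1 : H) + T.adjoint ⟨T p.1, p.2⟩ = y → c y = p := by
    intro p y hp
    exact hinj ((hspec y).trans hp.symm)
  -- the inverse as a plain function
  set S : H → H := fun y => ((c y).1 : H) with hS
  have hSadd : ∀ y z : H, S (y + z) = S y + S z := by
    intro y z
    have hd : T ((c y).1 + (c z).1) ∈ T.adjoint.domain := by
      rw [T.map_add]; exact Submodule.add_mem _ (c y).2 (c z).2
    have hsum : ((((c y).1 + (c z).1 : T.domain)) : H) +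
        T.adjoint ⟨T ((c y).1 + (c z).1), hd⟩ = y + z := by
      have hsubty : (⟨T ((c y).1 + (c z).1), hd⟩ : T.adjoint.domain) =
          (⟨T (c y).1, (c y).2⟩ : T.adjoint.domain) + ⟨T (c z).1, (c z).2⟩ := by
        apply Subtype.ext
        simp [T.map_add]
      rw [hsubty, T.adjoint.map_add]
      push_cast
      conv_rhs => rw [← hspec y, ← hspec z]
      abel
    have := huniq ⟨(c y).1 + (c z).1, hd⟩ (y + z) hsum
    simp only [hS]
    rw [this]
    push_cast
    rfl
  have hSsmul : ∀ (a : ℂ) (y : H), S (a • y) = a • S y := by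
    intro a y
    have hd : T (a • (c y).1) ∈ T.adjoint.domain := by
      rw [T.map_smul]; exact Submodule.smul_mem _ _ (c y).2
    have hsum : (((a • (c y).1 : T.domain)) : H) +
        T.adjoint ⟨T (a • (c y).1), hd⟩ = a • y := by
      have hsubty : (⟨T (a • (c y).1), hd⟩ : T.adjoint.domain) =
          a • (⟨T (c y).1, (c y).2⟩ : T.adjoint.domain) := by
        apply Subtype.ext
        simp [T.map_smul]
      rw [hsubty, T.adjoint.map_smul]
      push_cast
      conv_rhs => rw [← hspec y]
      rw [smul_add]
    have := huniq ⟨a • (c y).1, hd⟩ (a • y) hsum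
    simp only [hS]
    rw [this]
    push_cast
    rfl
  have hSbound : ∀ y : H, ‖S y‖ ≤ ‖y‖ := by
    intro y
    have := norm_le T hdense (c y)
    rwa [hspec y] at this
  set Slin : H →ₗ[ℂ] H :=
    { toFun := S, map_add' := hSadd, map_smul' := hSsmul } with hSlin
  set B : H →L[ℂ] H := LinearMap.mkContinuous Slin 1 (fun y => by
    rw [one_mul]; exact hSbound y) with hB
  have hBapply : ∀ y : H, B y = ((c y).1 : H) := fun y => rfl
  -- the key inner product formula
  have hkey : ∀ y z : H, ⟪B y, z⟫_ℂ =
      ⟪((c y).1 : H), ((c z).1 : H)⟫_ℂ + ⟪T (c y).1, T (c z).1⟫_ℂ := by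
    intro y z
    rw [hBapply]
    conv_lhs => rw [← hspec z]
    rw [inner_add_right]
    congr 1
    have h1 : ⟪T.adjoint ⟨T (c z).1, (c z).2⟩, ((c y).1 : H)⟫_ℂ =
        ⟪T (c z).1, T (c y).1⟫_ℂ :=
      adjoint_isFormalAdjoint hdense ⟨T (c z).1, (c z).2⟩ (c y).1
    calc ⟪((c y).1 : H), T.adjoint ⟨T (c z).1, (c z).2⟩⟫_ℂ
        = conj ⟪T.adjoint ⟨T (c z).1, (c z).2⟩, ((c y).1 : H)⟫_ℂ :=
          (inner_conj_symm _ _).symm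
      _ = conj ⟪T (c z).1, T (c y).1⟫_ℂ := by rw [h1]
      _ = ⟪T (c y).1, T (c z).1⟫_ℂ := inner_conj_symm _ _
  have hsymm : (B : H →ₗ[ℂ] H).IsSymmetric := by
    intro y z
    simp only [ContinuousLinearMap.coe_coe]
    rw [hkey]
    have : ⟪(y : H), B z⟫_ℂ = conj ⟪B z, y⟫_ℂ := (inner_conj_symm _ _).symm
    rw [this, hkey, _root_.map_add, inner_conj_symm, inner_conj_symm]
  have hsa : IsSelfAdjoint B := ContinuousLinearMap.isSelfAdjoint_iff_isSymmetric.mpr hsymm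
  have hpos : B.IsPositive := by
    refine ContinuousLinearMap.isPositive_def'.mpr ⟨hsa, fun y => ?_⟩
    rw [ContinuousLinearMap.reApplyInnerSelf]
    rw [hkey]
    rw [_root_.map_add]
    have h1 : 0 ≤ RCLike.re ⟪((c y).1 : H), ((c y).1 : H)⟫_ℂ := inner_self_nonneg
    have h2 : 0 ≤ RCLike.re ⟪T (c y).1, T (c y).1⟫_ℂ := inner_self_nonneg
    linarith
  have honesub : ((1 : H →L[ℂ] H) - B).IsPositive := by
    have haux : ∀ p : {p : T.domain // T p ∈ T.adjoint.domain},
        0 ≤ RCLike.re (K := ℂ)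
          ⟪T.adjoint ⟨T p.1, p.2⟩, (p.1 : H) + T.adjoint ⟨T p.1, p.2⟩⟫_ℂ := by
      intro p
      rw [inner_add_right]
      have h1 : ⟪T.adjoint ⟨T p.1, p.2⟩, (p.1 : H)⟫_ℂ = ⟪T p.1, T p.1⟫_ℂ :=
        adjoint_isFormalAdjoint hdense ⟨T p.1, p.2⟩ p.1
      rw [h1, _root_.map_add]
      have h2 : 0 ≤ RCLike.re (K := ℂ) ⟪T p.1, T p.1⟫_ℂ := inner_self_nonneg
      have h3 : 0 ≤ RCLike.re (K := ℂ)
          ⟪T.adjoint ⟨T p.1, p.2⟩, T.adjoint ⟨T p.1, p.2⟩⟫_ℂ := inner_self_nonneg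
      linarith
    refine ContinuousLinearMap.isPositive_def'.mpr ⟨(IsSelfAdjoint.one (H →L[ℂ] H)).sub hsa, fun y => ?_⟩
    rw [ContinuousLinearMap.reApplyInnerSelf]
    have hy' : (1 - B) y = T.adjoint ⟨T (c y).1, (c y).2⟩ := by
      simp only [ContinuousLinearMap.sub_apply, ContinuousLinearMap.one_apply, hBapply]
      exact sub_eq_of_eq_add' (hspec y).symm
    rw [hy']
    have h4 := haux (c y)
    rwa [hspec y] at h4
  refine ⟨⟨hinj, fun y => hsurj y⟩, B, hpos, hsa, honesub, ?_, hsurj⟩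
  intro p
  rw [hBapply]
  have := huniq p _ rfl
  rw [this]
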